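/- Let X be a random vector in R^d with P(||X|| > r) <= K/r^s for all r > 0. Fix x in R^d and let Y_1,...,Y_M be i.i.d. copies of X; let ν be the k-th nearest neighbor distance from x to {Y_1,...,Y_M} with k <= M/2. Then for any r >= (2K)^{1/s} + ||x|| and sufficiently large M, P(ν > r) <= (2eK/(r - ||x||)^s)^{M/2}. -/

import Mathlib

open MeasureTheory ProbabilityTheory Real

theorem knn_distance_tail_bound
    {Ω : Type*} [MeasurableSpace Ω]
    (d : ℕ) (K s : ℝ) (hK : 0 < K) (hs : 0 < s)
    (x : EuclideanSpace ℝ (Fin d)) :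
    ∃ M₀ : ℕ, ∀ M : ℕ, M₀ ≤ M →
      ∀ μ : Measure Ω, IsProbabilityMeasure μ →
      ∀ Y : Fin M → Ω → EuclideanSpace ℝ (Fin d),
        (∀ i, Measurable (Y i)) →
        iIndepFun Y μ →
        (∀ i j, μ.map (Y i) = μ.map (Y j)) →
        (∀ i, ∀ r : ℝ, 0 < r → (μ {ω | r < ‖Y i ω‖}).toReal ≤ K / r ^ s) →
        ∀ k : ℕ, 1 ≤ k → (k : ℝ) ≤ (M : ℝ) / 2 →
        ∀ r : ℝ, (2 * K) ^ (1 / s) + ‖x‖ ≤ r →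
          (μ {ω | (Finset.univ.filter fun i => dist (Y i ω) x ≤ r).card < k}).toReal
            ≤ (2 * Real.exp 1 * K / (r - ‖x‖) ^ s) ^ ((M : ℝ) / 2) := by
  refine ⟨0, fun M _ μ hμ Y hYm hYind _ hYtail k hk1 hkM r hr => ?_⟩
  set t : ℝ := r - ‖x‖ with ht
  have h2K : (0:ℝ) < 2 * K := by linarith
  have ht0 : (0:ℝ) < t := by
    have h1 : (0:ℝ) < (2 * K) ^ (1 / s) := Real.rpow_pos_of_pos h2K _
    have : (2 * K) ^ (1 / s) ≤ t := by simp only [ht]; linarith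
    linarith
  have hts : 2 * K ≤ t ^ s := by
    have h1 : ((2 * K) ^ (1 / s)) ^ s ≤ t ^ s := by
      apply Real.rpow_le_rpow (le_of_lt (Real.rpow_pos_of_pos h2K _)) _ hs.le
      simp only [ht]; linarith
    rwa [← Real.rpow_mul h2K.le, one_div, inv_mul_cancel₀ hs.ne',
      Real.rpow_one] at h1
  -- p : the tail probability bound
  set p : ℝ := K / t ^ s with hp
  have hts0 : (0:ℝ) < t ^ s := Real.rpow_pos_of_pos ht0 _
  have hp0 : 0 < p := div_pos hK hts0
  have hphalf : p ≤ 1 / 2 := by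
    rw [hp, div_le_div_iff₀ hts0 (by norm_num)]
    linarith
  -- m : threshold count
  set m : ℕ := M / 2 + 1 with hm
  have hkM' : k ≤ M / 2 := by
    rw [Nat.le_div_iff_mul_le (by norm_num)]
    exact_mod_cast (by push_cast; linarith : ((k * 2 : ℕ) : ℝ) ≤ (M : ℝ))
  -- the events
  set A : Fin M → Set Ω := fun i => {ω | t < ‖Y i ω‖} with hA
  -- inclusion of the bad event in the union over subsets of size m
  have hsub : {ω | (Finset.univ.filter fun i => dist (Y i ω) x ≤ r).card < k}
      ⊆ ⋃ S ∈ Finset.powersetCard m (Finset.univ : Finset (Fin M)), ⋂ i ∈ S, A i := by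
    intro ω hω
    simp only [Set.mem_setOf_eq] at hω
    set T : Finset (Fin M) := Finset.univ.filter fun i => t < ‖Y i ω‖ with hT
    have hTc : Finset.univ.filter (fun i => ¬ t < ‖Y i ω‖)
        ⊆ Finset.univ.filter fun i => dist (Y i ω) x ≤ r := by
      intro i hi
      simp only [Finset.mem_filter, Finset.mem_univ, true_and, not_lt] at hi ⊢
      calc dist (Y i ω) x ≤ ‖Y i ω‖ + ‖x‖ := by
            simpa [dist_eq_norm] using norm_sub_le (Y i ω) x
        _ ≤ t + ‖x‖ := by linarith
        _ = r := by simp [ht]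
    have hcard : m ≤ T.card := by
      have h1 : (Finset.univ.filter fun i => ¬ t < ‖Y i ω‖).card < k :=
        lt_of_le_of_lt (Finset.card_le_card hTc) hω
      have h2 : T.card + (Finset.univ.filter fun i => ¬ t < ‖Y i ω‖).card = M := by
        rw [hT, Finset.card_filter_add_card_filter_not]
        simp
      have h3 : M / 2 + M / 2 ≤ M := by omega
      omega
    obtain ⟨S, hST, hScard⟩ := Finset.exists_subset_card_eq hcard
    refine Set.mem_iUnion₂.2 ⟨S, ?_, ?_⟩
    · simp [Finset.mem_powersetCard, hScard]
    · refine Set.mem_iInter₂.2 fun i hi => ?_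
      have := hST hi
      rw [hT, Finset.mem_filter] at this
      exact this.2
  -- measure of each intersection
  have hAmeas : ∀ i : Fin M, MeasurableSet (A i) := fun i =>
    measurableSet_lt measurable_const (hYm i).norm
  have hAbound : ∀ i : Fin M, μ (A i) ≤ ENNReal.ofReal p := by
    intro i
    have h1 := hYtail i t ht0
    have h2 : μ (A i) ≠ ⊤ := (measure_lt_top μ _).ne
    calc μ (A i) = ENNReal.ofReal ((μ (A i)).toReal) := (ENNReal.ofReal_toReal h2).symm
      _ ≤ ENNReal.ofReal p := ENNReal.ofReal_le_ofReal h1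
  have hinter : ∀ S ∈ Finset.powersetCard m (Finset.univ : Finset (Fin M)),
      μ (⋂ i ∈ S, A i) ≤ (ENNReal.ofReal p) ^ m := by
    intro S hS
    rw [Finset.mem_powersetCard] at hS
    have heq : μ (⋂ i ∈ S, A i) = ∏ i ∈ S, μ (A i) := by
      refine hYind.meas_biInter fun i _ => ?_
      exact ⟨{y | t < ‖y‖}, measurableSet_lt measurable_const measurable_norm, rfl⟩
    rw [heq, ← hS.2]
    exact Finset.prod_le_pow_card _ _ _ fun i _ => hAbound i
  -- union bound
  have hbound : μ {ω | (Finset.univ.filter fun i => dist (Y i ω) x ≤ r).card < k}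
      ≤ (Nat.choose M m : ENNReal) * (ENNReal.ofReal p) ^ m := by
    calc μ {ω | (Finset.univ.filter fun i => dist (Y i ω) x ≤ r).card < k}
        ≤ μ (⋃ S ∈ Finset.powersetCard m (Finset.univ : Finset (Fin M)), ⋂ i ∈ S, A i) :=
          measure_mono hsub
      _ ≤ ∑ S ∈ Finset.powersetCard m (Finset.univ : Finset (Fin M)), μ (⋂ i ∈ S, A i) :=
          measure_biUnion_finset_le _ _
      _ ≤ ∑ _S ∈ Finset.powersetCard m (Finset.univ : Finset (Fin M)),
            (ENNReal.ofReal p) ^ m := Finset.sum_le_sum hinter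
      _ = (Nat.choose M m : ENNReal) * (ENNReal.ofReal p) ^ m := by
          rw [Finset.sum_const, Finset.card_powersetCard, Finset.card_univ,
            Fintype.card_fin, nsmul_eq_mul]
  -- pass to reals
  have hRHSfin : ((Nat.choose M m : ENNReal) * (ENNReal.ofReal p) ^ m) ≠ ⊤ := by
    exact ENNReal.mul_ne_top (ENNReal.natCast_ne_top _) (ENNReal.pow_ne_top ENNReal.ofReal_ne_top)
  have hreal : (μ {ω | (Finset.univ.filter fun i => dist (Y i ω) x ≤ r).card < k}).toReal
      ≤ (Nat.choose M m : ℝ) * p ^ m := by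
    have := ENNReal.toReal_mono hRHSfin hbound
    rwa [ENNReal.toReal_mul, ENNReal.toReal_pow, ENNReal.toReal_natCast,
      ENNReal.toReal_ofReal hp0.le] at this
  refine hreal.trans ?_
  -- now pure real arithmetic
  have hM2 : ((M:ℝ)/2) ≤ (m : ℝ) := by
    rw [hm]
    push_cast
    have hnat : M ≤ 2 * (M / 2) + 1 := by omega
    have : (M:ℝ) ≤ 2 * ((M / 2 : ℕ) : ℝ) + 1 := by exact_mod_cast hnat
    linarith
  have hpm : p ^ m ≤ p ^ ((M:ℝ)/2) := by
    rw [← Real.rpow_natCast p m]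
    exact Real.rpow_le_rpow_of_exponent_ge hp0 (by linarith) hM2
  have hchoose : (Nat.choose M m : ℝ) ≤ (4:ℝ) ^ ((M:ℝ)/2) := by
    have hc : Nat.choose M m ≤ 2 ^ M := by
      rcases le_or_gt m M with h | h
      · calc Nat.choose M m ≤ ∑ i ∈ Finset.range (M+1), Nat.choose M i :=
              Finset.single_le_sum (fun i _ => Nat.zero_le _)
                (Finset.mem_range.2 (Nat.lt_succ_of_le h))
          _ = 2 ^ M := Nat.sum_range_choose M
      · simp [Nat.choose_eq_zero_of_lt h]
    calc (Nat.choose M m : ℝ) ≤ (2:ℝ) ^ M := by exact_mod_cast hc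
      _ = (4:ℝ) ^ ((M:ℝ)/2) := by
          rw [show (4:ℝ) = (2:ℝ) ^ (2:ℝ) by norm_num [Real.rpow_natCast],
            ← Real.rpow_mul (by norm_num), ← Real.rpow_natCast 2 M]
          ring_nf
  have hfinal : (4:ℝ) ^ ((M:ℝ)/2) * p ^ ((M:ℝ)/2)
      ≤ (2 * Real.exp 1 * K / t ^ s) ^ ((M:ℝ)/2) := by
    rw [← Real.mul_rpow (by norm_num) hp0.le]
    apply Real.rpow_le_rpow (by positivity) _ (by positivity)
    have he : (4:ℝ) ≤ 2 * Real.exp 1 := by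
      have := Real.add_one_le_exp (1:ℝ)
      linarith
    have : 2 * Real.exp 1 * K / t ^ s = 2 * Real.exp 1 * p := by
      rw [hp]; ring
    rw [this]
    nlinarith [hp0.le]
  calc (Nat.choose M m : ℝ) * p ^ m ≤ (4:ℝ) ^ ((M:ℝ)/2) * p ^ ((M:ℝ)/2) := by
        apply mul_le_mul hchoose hpm (by positivity) (by positivity)
    _ ≤ (2 * Real.exp 1 * K / t ^ s) ^ ((M:ℝ)/2) := hfinal
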